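/- Let {a_n} be a non-decreasing sequence of positive odd integers with limsup_{n→∞} a_n^{1/2^n} = ∞, and let {r_n} be a sequence of pairwise distinct non-negative integers. Then for every sequence {c_n} of odd integers, the series Σ_{n=1}^∞ 1/(2^{r_n} · a_n · c_n) converges to an irrational number. -/

import Mathlib

open Filter

private lemma size_mul_le (a b : ℕ) : (a * b).size ≤ a.size + b.size := by
  rcases Nat.eq_zero_or_pos a with h | h
  · simp [h]
  rcases Nat.eq_zero_or_pos b with h' | h'
  · simp [h']
  apply Nat.size_le.mpr
  calc a * b < 2 ^ a.size * 2 ^ b.size := by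
        have ha := Nat.lt_size_self a
        have hb := Nat.lt_size_self b
        exact Nat.mul_lt_mul_of_lt_of_lt ha hb
    _ = 2 ^ (a.size + b.size) := (pow_add 2 _ _).symm

private lemma exists_ge_of_injective (g : ℕ → ℕ) (hg : Function.Injective g) (k : ℕ) :
    ∃ i ≤ k, k ≤ g i := by
  by_contra h
  push_neg at h
  have hcard : (Finset.range (k+1)).card ≤ (Finset.range k).card := by
    apply Finset.card_le_card_of_injOn g
    · intro i hi
      simp only [Finset.coe_range, Set.mem_Iio, Finset.mem_range] at *
      exact h i (by omega)
    · exact fun a _ b _ hab => hg hab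
  simp at hcard

private lemma geom_summable_ite (K : ℕ) :
    Summable (fun i : ℕ => (if K < i then ((2:ℝ)⁻¹) ^ i else 0)) := by
  have hgeo : Summable (fun i : ℕ => ((2:ℝ)⁻¹) ^ i) :=
    summable_geometric_of_lt_one (by norm_num) (by norm_num)
  apply Summable.of_nonneg_of_le (fun i => ?_) (fun i => ?_) hgeo
  · split <;> positivity
  · split
    · exact le_rfl
    · positivity

private lemma geom_tail (K : ℕ) :
    ∑' i : ℕ, (if K < i then ((2:ℝ)⁻¹) ^ i else 0) = ((2:ℝ)⁻¹) ^ K := by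
  set f : ℕ → ℝ := fun i => (if K < i then ((2:ℝ)⁻¹) ^ i else 0) with hf
  have hs : Summable f := geom_summable_ite K
  have h := hs.sum_add_tsum_nat_add (K+1)
  have h1 : ∑ i ∈ Finset.range (K+1), f i = 0 := by
    apply Finset.sum_eq_zero
    intro i hi
    simp only [Finset.mem_range] at hi
    simp only [hf]
    rw [if_neg (by omega)]
  have h2 : (fun i : ℕ => f (i + (K+1))) = fun i : ℕ => ((2:ℝ)⁻¹)^(K+1) * ((2:ℝ)⁻¹) ^ i := by
    funext i
    simp only [hf]
    rw [if_pos (by omega), pow_add]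
    ring
  have h3 : ∑' i : ℕ, f (i + (K+1)) = ((2:ℝ)⁻¹)^(K+1) * 2 := by
    rw [h2, tsum_mul_left, tsum_geometric_of_lt_one (by norm_num) (by norm_num)]
    norm_num
  rw [h1, h3, zero_add] at h
  have h4 : ((2:ℝ)⁻¹)^(K+1) * 2 = ((2:ℝ)⁻¹)^K := by
    rw [pow_succ]; ring
  linarith [h, h4]

private theorem aux (α : ℕ → ℕ) (hmono : Monotone α) (hodd : ∀ n, Odd (α n))
    (hpos : ∀ n, 0 < α n)
    (hbig : ∀ C : ℕ, ∃ᶠ k in atTop, C ^ 2 ^ k < α k)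
    (ρ : ℕ → ℕ) (hρ : Function.Injective ρ)
    (γ : ℕ → ℤ) (hγ : ∀ n, Odd (γ n)) :
    Irrational (∑' k : ℕ, 1 / ((2:ℝ) ^ ρ k * (α k : ℝ) * (γ k : ℝ))) := by
  classical
  set f : ℕ → ℝ := fun k => 1 / ((2:ℝ) ^ ρ k * (α k : ℝ) * (γ k : ℝ)) with hfdef
  have hγ0 : ∀ k, γ k ≠ 0 := by
    intro k
    obtain ⟨m, hm⟩ := hγ k
    omega
  have hα1 : ∀ k, 1 ≤ α k := hpos
  have hγ1 : ∀ k, 1 ≤ (γ k).natAbs := fun k => Int.natAbs_pos.mpr (hγ0 k)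
  set D : ℕ → ℕ := fun k => 2 ^ ρ k * (α k * (γ k).natAbs) with hDdef
  have hD1 : ∀ k, 1 ≤ D k := by
    intro k
    have := hα1 k; have := hγ1 k
    have h2 : 1 ≤ 2 ^ ρ k := Nat.one_le_two_pow
    calc 1 = 1 * (1 * 1) := by ring
      _ ≤ 2 ^ ρ k * (α k * (γ k).natAbs) := by
          exact Nat.mul_le_mul h2 (Nat.mul_le_mul (hα1 k) (hγ1 k))
  have hDα : ∀ k, α k ≤ D k := by
    intro k
    calc α k = 1 * (α k * 1) := by ring
      _ ≤ 2 ^ ρ k * (α k * (γ k).natAbs) :=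
          Nat.mul_le_mul Nat.one_le_two_pow (Nat.mul_le_mul le_rfl (hγ1 k))
  have hDρ : ∀ k, 2 ^ ρ k ≤ D k := by
    intro k
    calc 2 ^ ρ k = 2 ^ ρ k * 1 := by ring
      _ ≤ 2 ^ ρ k * (α k * (γ k).natAbs) :=
          Nat.mul_le_mul le_rfl (Nat.one_le_iff_ne_zero.mpr (by
            have := hα1 k; have := hγ1 k; positivity))
  have hoddpart : ∀ k, Odd (α k * (γ k).natAbs) :=
    fun k => (hodd k).mul (Int.natAbs_odd.mpr (hγ k))
  have hfac : ∀ k, (D k).factorization 2 = ρ k := by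
    intro k
    have hne1 : (2:ℕ) ^ ρ k ≠ 0 := by positivity
    have hne2 : α k * (γ k).natAbs ≠ 0 := by
      have := hoddpart k
      rcases this with ⟨m, hm⟩
      omega
    have hnd : ¬ (2:ℕ) ∣ (α k * (γ k).natAbs) := by
      have := Nat.odd_iff.mp (hoddpart k)
      omega
    rw [hDdef]
    simp only
    rw [Nat.factorization_mul hne1 hne2]
    simp [Nat.Prime.factorization_pow Nat.prime_two,
      Nat.factorization_eq_zero_of_not_dvd hnd]
  have hDinj : Function.Injective D := by
    intro i j h
    apply hρ
    rw [← hfac i, ← hfac j, h]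
  have habs : ∀ k, |f k| = (D k : ℝ)⁻¹ := by
    intro k
    have h2 : |(2:ℝ) ^ ρ k * (α k:ℝ) * (γ k:ℝ)| = (2:ℝ)^ρ k * (α k:ℝ) * |(γ k:ℝ)| := by
      rw [abs_mul]
      congr 1
      rw [abs_of_nonneg (by positivity : (0:ℝ) ≤ (2:ℝ)^ρ k * (α k:ℝ))]
    have h3 : ((D k : ℕ) : ℝ) = (2:ℝ)^ρ k * (α k:ℝ) * |(γ k:ℝ)| := by
      rw [hDdef]
      push_cast [Nat.cast_natAbs, Int.cast_abs]
      ring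
    simp only [hfdef, one_div, abs_inv, h2, h3]
  have hDsum : Summable (fun j : ℕ => (D j:ℝ)⁻¹) := by
    have h1 : Summable (fun k => |f k|) := by
      have hg : Summable (fun k => ((2:ℝ)⁻¹) ^ ρ k) :=
        (summable_geometric_of_lt_one (by norm_num) (by norm_num)).comp_injective hρ
      apply Summable.of_nonneg_of_le (fun k => abs_nonneg _) (fun k => ?_) hg
      rw [habs k, inv_pow]
      have hp2 : (0:ℝ) < (2:ℝ) ^ ρ k := by positivity
      exact inv_anti₀ hp2 (by exact_mod_cast hDρ k)
    have hfe : (fun j => |f j|) = fun j : ℕ => (D j:ℝ)⁻¹ := funext habs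
    rwa [hfe] at h1
  have hsum : Summable f := by
    apply Summable.of_abs
    have hfe : (fun j => |f j|) = fun j : ℕ => (D j:ℝ)⁻¹ := funext habs
    rw [hfe]
    exact hDsum
  rintro ⟨ξ, hξ⟩
  set q : ℕ := ξ.den with hqdef
  set p : ℤ := ξ.num with hpdef
  have hq0 : q ≠ 0 := ξ.den_nz
  set s : ℕ := q.factorization 2 with hsdef
  set q' : ℕ := q / 2 ^ s with hq'def
  have hqeq : 2 ^ s * q' = q := Nat.ordProj_mul_ordCompl_eq_self q 2
  have hq'odd : ¬ 2 ∣ q' := Nat.not_dvd_ordCompl Nat.prime_two hq0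
  have hq'0 : q' ≠ 0 := by
    intro h
    rw [h, mul_zero] at hqeq
    exact hq0 hqeq.symm
  obtain ⟨m₀, hm₀⟩ : ∃ k, s < ρ k := by
    obtain ⟨i, _, hi⟩ := exists_ge_of_injective ρ hρ (s+1)
    exact ⟨i, by omega⟩
  -- the key 2-adic lemma
  have zlem : ∀ F : Finset ℕ, m₀ ∈ F →
      1 ≤ (q:ℝ) * (∏ j ∈ F, (D j : ℝ)) * ∑' (j : ↑(↑F : Set ℕ)ᶜ), (D (j:ℕ) : ℝ)⁻¹ := by
    intro F hmF
    have hne : F.Nonempty := ⟨m₀, hmF⟩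
    set R : ℕ := F.sup ρ with hRdef
    obtain ⟨js, hjsF, hjs⟩ := Finset.exists_mem_eq_sup F hne ρ
    rw [← hRdef] at hjs
    have hRle : ∀ j ∈ F, ρ j ≤ R := fun j hj => Finset.le_sup hj
    have hsR : s < R := lt_of_lt_of_le hm₀ (Finset.le_sup hmF)
    set Z : ℤ := p * 2 ^ (R - s) * (∏ j ∈ F, ((α j : ℤ) * γ j))
        - ∑ j ∈ F, (q' : ℤ) * 2 ^ (R - ρ j) * ∏ i ∈ F.erase j, ((α i : ℤ) * γ i) with hZdef
    -- parity of Z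
    have hq'Z : Odd (q':ℤ) := by
      rw [Int.odd_coe_nat]
      rw [Nat.odd_iff]
      omega
    have hoddprod : ∀ (s' : Finset ℕ), Odd (∏ i ∈ s', ((α i:ℤ) * γ i)) := by
      intro s'
      apply Finset.prod_induction _ Odd (fun a b => Odd.mul) odd_one
      intro x _
      exact ((Int.odd_coe_nat _).mpr (hodd x)).mul (hγ x)
    have hevent1 : (2:ℤ) ∣ p * 2 ^ (R - s) * (∏ j ∈ F, ((α j:ℤ) * γ j)) := by
      have h1 : (2:ℤ) ∣ 2 ^ (R - s) := dvd_pow_self 2 (by omega)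
      exact Dvd.dvd.mul_right (Dvd.dvd.mul_left h1 p) _
    have hsum_split : (q':ℤ) * 2 ^ (R - ρ js) * (∏ i ∈ F.erase js, ((α i:ℤ) * γ i))
        + ∑ j ∈ F.erase js, ((q':ℤ) * 2 ^ (R - ρ j) * ∏ i ∈ F.erase j, ((α i:ℤ) * γ i))
        = ∑ j ∈ F, ((q':ℤ) * 2 ^ (R - ρ j) * ∏ i ∈ F.erase j, ((α i:ℤ) * γ i)) :=
      Finset.add_sum_erase F
        (fun j => (q':ℤ) * 2 ^ (R - ρ j) * ∏ i ∈ F.erase j, ((α i:ℤ) * γ i)) hjsF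
    have hoddjs : Odd ((q':ℤ) * 2 ^ (R - ρ js) * ∏ i ∈ F.erase js, ((α i:ℤ) * γ i)) := by
      have h0 : R - ρ js = 0 := by omega
      rw [h0, pow_zero, mul_one]
      exact hq'Z.mul (hoddprod _)
    have heverase : (2:ℤ) ∣ ∑ j ∈ F.erase js,
        ((q':ℤ) * 2 ^ (R - ρ j) * ∏ i ∈ F.erase j, ((α i:ℤ) * γ i)) := by
      apply Finset.dvd_sum
      intro j hj
      have hjF := Finset.mem_of_mem_erase hj
      have hjne : j ≠ js := Finset.ne_of_mem_erase hj
      have hlt : ρ j < R := by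
        rcases lt_or_eq_of_le (hRle j hjF) with h | h
        · exact h
        · exact absurd (hρ (h.trans hjs)) hjne
      have h2 : (2:ℤ) ∣ 2 ^ (R - ρ j) := dvd_pow_self 2 (by omega)
      exact Dvd.dvd.mul_right (Dvd.dvd.mul_left h2 _) _
    have hZodd : Odd Z := by
      obtain ⟨u, hu⟩ := hevent1
      obtain ⟨w, hw⟩ := hoddjs
      obtain ⟨v, hv⟩ := heverase
      refine ⟨u - w - v - 1, ?_⟩
      rw [hZdef, ← hsum_split, hu, hw, hv]
      ring
    have hZne : Z ≠ 0 := by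
      intro h
      rw [h] at hZodd
      exact (Int.not_odd_iff_even.mpr (Even.zero : Even (0:ℤ))) hZodd
    have hZ1 : (1:ℝ) ≤ |(Z:ℝ)| := by
      have := Int.one_le_abs hZne
      exact_mod_cast this
    -- the identity
    have hX : (∑' k, f k) = (p:ℝ) / (q:ℝ) := by
      rw [← hξ, Rat.cast_def]
    have hcompl : ∑' (j : ↑(↑F : Set ℕ)ᶜ), f (j:ℕ) = (∑' k, f k) - ∑ j ∈ F, f j := by
      have h := hsum.sum_add_tsum_compl (s := F)
      linarith [h]
    have hq'ne : (q':ℝ) ≠ 0 := Nat.cast_ne_zero.mpr hq'0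
    have e1 : ((q':ℝ) * 2 ^ R * ((∏ j ∈ F, ((α j : ℤ) * γ j) : ℤ):ℝ)) * (∑' k, f k)
        = (p:ℝ) * 2 ^ (R - s) * ((∏ j ∈ F, ((α j : ℤ) * γ j) : ℤ):ℝ) := by
      rw [hX]
      have hqR : (q:ℝ) = 2 ^ s * (q':ℝ) := by exact_mod_cast hqeq.symm
      have h2R : (2:ℝ) ^ R = 2 ^ (R - s) * 2 ^ s := by
        rw [← pow_add]
        congr 1
        omega
      rw [hqR, h2R]
      field_simp
    have e2 : ∀ j ∈ F, ((q':ℝ) * 2 ^ R * ((∏ j ∈ F, ((α j : ℤ) * γ j) : ℤ):ℝ)) * f j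
        = (q':ℝ) * 2 ^ (R - ρ j) * ((∏ i ∈ F.erase j, ((α i : ℤ) * γ i) : ℤ):ℝ) := by
      intro j hj
      have hPfac : ((∏ j ∈ F, ((α j : ℤ) * γ j) : ℤ):ℝ)
          = ((α j:ℝ) * (γ j:ℝ)) * ((∏ i ∈ F.erase j, ((α i : ℤ) * γ i) : ℤ):ℝ) := by
        rw [← Finset.mul_prod_erase F _ hj]
        push_cast
        ring
      have h2R : (2:ℝ) ^ R = 2 ^ (R - ρ j) * 2 ^ ρ j := by
        rw [← pow_add]
        congr 1
        have := hRle j hj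
        omega
      have hαne : ((α j:ℝ)) ≠ 0 := by
        have := hα1 j
        positivity
      have hγne : ((γ j:ℝ)) ≠ 0 := Int.cast_ne_zero.mpr (hγ0 j)
      have h2ne : ((2:ℝ) ^ ρ j) ≠ 0 := by positivity
      rw [hPfac, h2R]
      simp only [hfdef, one_div]
      field_simp
    have hkey : ((q':ℝ) * 2 ^ R * ((∏ j ∈ F, ((α j : ℤ) * γ j) : ℤ):ℝ))
        * ∑' (j : ↑(↑F : Set ℕ)ᶜ), f (j:ℕ) = (Z:ℝ) := by
      rw [hcompl, mul_sub, Finset.mul_sum, e1, Finset.sum_congr rfl e2, hZdef]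
      push_cast
      ring
    -- bounds
    have hsubabs : Summable (fun j : ↑(↑F : Set ℕ)ᶜ => |f (j:ℕ)|) := by
      have h1 : Summable (fun k : ℕ => |f k|) := by
        have hfe : (fun j => |f j|) = fun j : ℕ => (D j:ℝ)⁻¹ := funext habs
        rw [hfe]; exact hDsum
      exact h1.subtype _
    have habs_tsum : |∑' (j : ↑(↑F : Set ℕ)ᶜ), f (j:ℕ)|
        ≤ ∑' (j : ↑(↑F : Set ℕ)ᶜ), (D (j:ℕ) : ℝ)⁻¹ := by
      have h1 : |∑' (j : ↑(↑F : Set ℕ)ᶜ), f (j:ℕ)| ≤ ∑' (j : ↑(↑F : Set ℕ)ᶜ), |f (j:ℕ)| := by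
        have := norm_tsum_le_tsum_norm (f := fun j : ↑(↑F : Set ℕ)ᶜ => f (j:ℕ))
          (by simpa [Real.norm_eq_abs] using hsubabs)
        simpa [Real.norm_eq_abs] using this
      have h2 : ∑' (j : ↑(↑F : Set ℕ)ᶜ), |f (j:ℕ)| = ∑' (j : ↑(↑F : Set ℕ)ᶜ), (D (j:ℕ):ℝ)⁻¹ :=
        tsum_congr (fun j => habs (j:ℕ))
      linarith
    have habsA : |((q':ℝ) * 2 ^ R * ((∏ j ∈ F, ((α j : ℤ) * γ j) : ℤ):ℝ))|
        = (q':ℝ) * 2 ^ R * ∏ j ∈ F, ((α j:ℝ) * |(γ j:ℝ)|) := by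
      rw [abs_mul, abs_mul]
      rw [abs_of_nonneg (by positivity : (0:ℝ) ≤ (q':ℝ)),
        abs_of_nonneg (by positivity : (0:ℝ) ≤ (2:ℝ)^R)]
      congr 1
      push_cast
      rw [Finset.abs_prod]
      apply Finset.prod_congr rfl
      intro j _
      rw [abs_mul, abs_of_nonneg (by positivity : (0:ℝ) ≤ (α j:ℝ))]
    have hNnat : q' * 2 ^ R * (∏ j ∈ F, (α j * (γ j).natAbs)) ≤ q * ∏ j ∈ F, D j := by
      have h2R : 2 ^ R ≤ ∏ j ∈ F, 2 ^ ρ j := by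
        calc 2 ^ R = 2 ^ ρ js := by rw [hjs]
          _ ≤ ∏ j ∈ F, 2 ^ ρ j :=
            Finset.single_le_prod' (fun i _ => Nat.one_le_two_pow) hjsF
      have hq'q : q' ≤ q := Nat.div_le_self _ _
      calc q' * 2 ^ R * ∏ j ∈ F, (α j * (γ j).natAbs)
          ≤ (q * ∏ j ∈ F, 2 ^ ρ j) * ∏ j ∈ F, (α j * (γ j).natAbs) :=
            Nat.mul_le_mul (Nat.mul_le_mul hq'q h2R) le_rfl
        _ = q * ∏ j ∈ F, D j := by
            rw [mul_assoc, ← Finset.prod_mul_distrib]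
    have hTnn : 0 ≤ ∑' (j : ↑(↑F : Set ℕ)ᶜ), (D (j:ℕ):ℝ)⁻¹ :=
      tsum_nonneg (fun j => by positivity)
    have hcastA : ((q':ℝ) * 2 ^ R * ∏ j ∈ F, ((α j:ℝ) * |(γ j:ℝ)|))
        ≤ (q:ℝ) * ∏ j ∈ F, (D j:ℝ) := by
      have h1 : ((q' * 2 ^ R * (∏ j ∈ F, (α j * (γ j).natAbs)) : ℕ) : ℝ)
          ≤ ((q * ∏ j ∈ F, D j : ℕ):ℝ) := Nat.cast_le.mpr hNnat
      push_cast [Nat.cast_natAbs, Int.cast_abs] at h1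
      convert h1 using 2
    calc (1:ℝ) ≤ |(Z:ℝ)| := hZ1
      _ = |((q':ℝ) * 2 ^ R * ((∏ j ∈ F, ((α j : ℤ) * γ j) : ℤ):ℝ))|
          * |∑' (j : ↑(↑F : Set ℕ)ᶜ), f (j:ℕ)| := by rw [← hkey, abs_mul]
      _ ≤ |((q':ℝ) * 2 ^ R * ((∏ j ∈ F, ((α j : ℤ) * γ j) : ℤ):ℝ))|
          * ∑' (j : ↑(↑F : Set ℕ)ᶜ), (D (j:ℕ):ℝ)⁻¹ :=
            mul_le_mul_of_nonneg_left habs_tsum (abs_nonneg _)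
      _ = ((q':ℝ) * 2 ^ R * ∏ j ∈ F, ((α j:ℝ) * |(γ j:ℝ)|))
          * ∑' (j : ↑(↑F : Set ℕ)ᶜ), (D (j:ℕ):ℝ)⁻¹ := by rw [habsA]
      _ ≤ ((q:ℝ) * ∏ j ∈ F, (D j:ℝ)) * ∑' (j : ↑(↑F : Set ℕ)ᶜ), (D (j:ℕ):ℝ)⁻¹ :=
            mul_le_mul_of_nonneg_right hcastA hTnn
  -- sorted values machinery
  set pr : ℕ → Prop := fun x => x ∈ Set.range D with hprdef
  have hprinf : (setOf pr).Infinite := by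
    have := Set.infinite_range_of_injective hDinj
    exact this
  set N : ℕ → ℕ := fun k => Nat.nth pr k with hNdef
  have hNmono : StrictMono N := Nat.nth_strictMono hprinf
  have hNmem : ∀ k, ∃ j, D j = N k := by
    intro k
    have := Nat.nth_mem_of_infinite hprinf k
    exact this
  choose idx hidx using hNmem
  have hidxinj : Function.Injective idx := by
    intro i j h
    apply hNmono.injective
    rw [← hidx i, ← hidx j, h]
  have hcount : ∀ j, N (Nat.count pr (D j)) = D j :=
    fun j => Nat.nth_count ⟨j, rfl⟩
  have hN2 : ∀ k, 2 ^ k ≤ N k := by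
    intro k
    obtain ⟨i, hik, hgi⟩ := exists_ge_of_injective (fun i => ρ (idx i)) (hρ.comp hidxinj) k
    calc 2^k ≤ 2 ^ ρ (idx i) := Nat.pow_le_pow_right (by norm_num) hgi
      _ ≤ D (idx i) := hDρ _
      _ = N i := hidx i
      _ ≤ N k := hNmono.monotone hik
  have hNα : ∀ k, α k ≤ N k := by
    intro k
    obtain ⟨i, hik, hgi⟩ := exists_ge_of_injective idx hidxinj k
    calc α k ≤ α (idx i) := hmono hgi
      _ ≤ D (idx i) := hDα _
      _ = N i := hidx i
      _ ≤ N k := hNmono.monotone hik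
  have hN1 : ∀ k, 1 ≤ N k := fun k => le_trans Nat.one_le_two_pow (hN2 k)
  set G : ℕ → ℕ := fun k => q * D m₀ * ∏ i ∈ Finset.range (k+1), N i with hGdef
  have hq1 : 1 ≤ q := Nat.one_le_iff_ne_zero.mpr hq0
  have hG1 : ∀ k, 1 ≤ G k := by
    intro k
    rw [hGdef]
    simp only
    have h1 : 1 ≤ ∏ i ∈ Finset.range (k+1), N i :=
      Finset.one_le_prod' (fun i _ => hN1 i)
    calc 1 = 1 * 1 * 1 := by ring
      _ ≤ q * D m₀ * ∏ i ∈ Finset.range (k+1), N i :=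
        Nat.mul_le_mul (Nat.mul_le_mul hq1 (hD1 m₀)) h1
  have hNG : ∀ k, N k ≤ G k := by
    intro k
    rw [hGdef]
    simp only
    have h1 : N k ≤ ∏ i ∈ Finset.range (k+1), N i :=
      Finset.single_le_prod' (fun i _ => hN1 i) (Finset.self_mem_range_succ k)
    calc N k = 1 * 1 * N k := by ring
      _ ≤ q * D m₀ * ∏ i ∈ Finset.range (k+1), N i :=
        Nat.mul_le_mul (Nat.mul_le_mul hq1 (hD1 m₀)) h1
  -- the key growth bound
  have hA : ∀ k, N (k+1) ≤ 2 * ((G k).size + 2) * G k := by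
    intro k
    set K : ℕ := k + (G k).size + 2 with hKdef
    set Fk : Finset ℕ := insert m₀ ((Finset.range (k+1)).image idx) with hFkdef
    have hmFk : m₀ ∈ Fk := Finset.mem_insert_self _ _
    have h1 := zlem Fk hmFk
    have hprodF : (∏ j ∈ Fk, D j) ≤ D m₀ * ∏ i ∈ Finset.range (k+1), N i := by
      have himg : ∏ j ∈ (Finset.range (k+1)).image idx, D j
          = ∏ i ∈ Finset.range (k+1), N i := by
        rw [Finset.prod_image (fun x _ y _ h => hidxinj h)]
        exact Finset.prod_congr rfl (fun i _ => hidx i)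
      by_cases hmem : m₀ ∈ (Finset.range (k+1)).image idx
      · rw [hFkdef, Finset.insert_eq_self.mpr hmem, himg]
        exact Nat.le_mul_of_pos_left _ (hD1 m₀)
      · rw [hFkdef, Finset.prod_insert hmem, himg]
    -- indices outside Fk have rank > k
    have hjrank : ∀ (j : ℕ), j ∉ Fk → k + 1 ≤ Nat.count pr (D j) := by
      intro j hj
      by_contra hlt
      push_neg at hlt
      have h2 : idx (Nat.count pr (D j)) = j := hDinj (by rw [hidx, hcount])
      apply hj
      rw [hFkdef]
      apply Finset.mem_insert_of_mem
      exact Finset.mem_image.mpr ⟨Nat.count pr (D j), Finset.mem_range.mpr (by omega), h2⟩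
    -- tail bound
    have htail : (∑' (j : ↑(↑Fk : Set ℕ)ᶜ), (D (j:ℕ) : ℝ)⁻¹)
        ≤ ((G k).size + 2 : ℕ) * (N (k+1) : ℝ)⁻¹ + ((2:ℝ)⁻¹) ^ K := by
      set g : ℕ → ℝ := fun i => (if i ∈ Finset.Icc (k+1) K then (N (k+1) : ℝ)⁻¹ else 0)
          + (if K < i then ((2:ℝ)⁻¹) ^ i else 0) with hgdef
      have hg1sum : Summable (fun i => (if i ∈ Finset.Icc (k+1) K then (N (k+1) : ℝ)⁻¹ else 0)) :=
        summable_of_ne_finset_zero (s := Finset.Icc (k+1) K) (fun b hb => if_neg hb)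
      have hg2sum := geom_summable_ite K
      have hgsum : Summable g := hg1sum.add hg2sum
      have heinj : Function.Injective
          (fun b : ↑(↑Fk : Set ℕ)ᶜ => Nat.count pr (D (b:ℕ))) := by
        intro b1 b2 h
        apply Subtype.ext
        apply hDinj
        simp only at h
        rw [← hcount (b1:ℕ), ← hcount (b2:ℕ), h]
      have hle : ∀ (b : ↑(↑Fk : Set ℕ)ᶜ),
          (D (b:ℕ):ℝ)⁻¹ ≤ g (Nat.count pr (D (b:ℕ))) := by
        intro b
        have hbnot : (b:ℕ) ∉ Fk := fun hmem => b.2 (Finset.mem_coe.mpr hmem)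
        have hik : k + 1 ≤ Nat.count pr (D (b:ℕ)) := hjrank _ hbnot
        have hNi : N (Nat.count pr (D (b:ℕ))) = D (b:ℕ) := hcount _
        set i := Nat.count pr (D (b:ℕ))
        simp only [hgdef]
        by_cases hiK : i ≤ K
        · rw [if_pos (Finset.mem_Icc.mpr ⟨hik, hiK⟩)]
          have hmain : (D (b:ℕ):ℝ)⁻¹ ≤ (N (k+1) : ℝ)⁻¹ := by
            rw [← hNi]
            have hp : (0:ℝ) < (N (k+1) : ℝ) := by
              exact_mod_cast lt_of_lt_of_le Nat.zero_lt_one (hN1 (k+1))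
            exact inv_anti₀ hp (by exact_mod_cast hNmono.monotone hik)
          have h2 : (0:ℝ) ≤ (if K < i then ((2:ℝ)⁻¹)^i else 0) := by
            split <;> positivity
          linarith
        · rw [if_neg (by simp only [Finset.mem_Icc]; omega), if_pos (by omega), zero_add,
            ← hNi, inv_pow]
          have hp2 : (0:ℝ) < (2:ℝ) ^ i := by positivity
          exact inv_anti₀ hp2 (by exact_mod_cast hN2 i)
      have hsubD : Summable (fun b : ↑(↑Fk : Set ℕ)ᶜ => (D (b:ℕ):ℝ)⁻¹) := hDsum.subtype _
      have h2 := hsubD.tsum_le_tsum_of_inj _ heinj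
        (fun c _ => by
          simp only [hgdef]
          have ha : (0:ℝ) ≤ (if c ∈ Finset.Icc (k+1) K then (N (k+1) : ℝ)⁻¹ else 0) := by
            split <;> positivity
          have hb : (0:ℝ) ≤ (if K < c then ((2:ℝ)⁻¹) ^ c else 0) := by
            split <;> positivity
          linarith)
        hle hgsum
      have hg1 : ∑' i : ℕ, (if i ∈ Finset.Icc (k+1) K then (N (k+1) : ℝ)⁻¹ else 0)
          = ((G k).size + 2 : ℕ) * (N (k+1) : ℝ)⁻¹ := by
        rw [tsum_eq_sum (s := Finset.Icc (k+1) K) (fun b hb => if_neg hb)]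
        rw [Finset.sum_congr rfl (fun b hb => if_pos hb)]
        rw [Finset.sum_const, Nat.card_Icc]
        have : K + 1 - (k+1) = (G k).size + 2 := by omega
        rw [this, nsmul_eq_mul]
      have hgeq := hg1sum.tsum_add hg2sum
      rw [hg1, geom_tail] at hgeq
      exact le_trans h2 (le_of_eq hgeq)
    -- combine
    have hGkb : (q:ℝ) * (∏ j ∈ Fk, (D j:ℝ)) ≤ (G k : ℝ) := by
      have h3 : q * (∏ j ∈ Fk, D j) ≤ G k := by
        rw [hGdef]
        simp only
        rw [mul_assoc]
        exact Nat.mul_le_mul le_rfl hprodF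
      calc (q:ℝ) * (∏ j ∈ Fk, (D j:ℝ)) = ((q * ∏ j ∈ Fk, D j : ℕ) : ℝ) := by push_cast; ring
        _ ≤ (G k : ℝ) := Nat.cast_le.mpr h3
    have hTnn : 0 ≤ ∑' (j : ↑(↑Fk : Set ℕ)ᶜ), (D (j:ℕ):ℝ)⁻¹ :=
      tsum_nonneg (fun j => by positivity)
    have h4 : (1:ℝ) ≤ (G k : ℝ) * (((G k).size + 2 : ℕ) * (N (k+1) : ℝ)⁻¹ + ((2:ℝ)⁻¹) ^ K) := by
      calc (1:ℝ) ≤ (q:ℝ) * (∏ j ∈ Fk, (D j:ℝ)) * ∑' (j : ↑(↑Fk : Set ℕ)ᶜ), (D (j:ℕ):ℝ)⁻¹ := h1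
        _ ≤ (G k:ℝ) * ∑' (j : ↑(↑Fk : Set ℕ)ᶜ), (D (j:ℕ):ℝ)⁻¹ :=
            mul_le_mul_of_nonneg_right hGkb hTnn
        _ ≤ (G k : ℝ) * (((G k).size + 2 : ℕ) * (N (k+1) : ℝ)⁻¹ + ((2:ℝ)⁻¹) ^ K) := by
            apply mul_le_mul_of_nonneg_left htail
            positivity
    -- G k * 2⁻¹ ^ K ≤ 1/4
    have h5 : (G k : ℝ) * ((2:ℝ)⁻¹) ^ K ≤ 1/4 := by
      have hGlt : (G k : ℝ) ≤ 2 ^ ((G k).size) := by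
        exact_mod_cast (Nat.lt_size_self (G k)).le
      have hKe : ((2:ℝ)⁻¹) ^ K = ((2:ℝ) ^ K)⁻¹ := inv_pow 2 K
      rw [hKe, hKdef]
      have h2K : (2:ℝ) ^ (k + (G k).size + 2) = 2 ^ k * 2 ^ ((G k).size) * 4 := by
        rw [pow_add, pow_add]
        norm_num
      rw [h2K]
      have hk1 : (1:ℝ) ≤ 2 ^ k := one_le_pow₀ (by norm_num)
      have hb : (0:ℝ) < 2 ^ ((G k).size) := by positivity
      have ha : (0:ℝ) < (2:ℝ) ^ k := by positivity
      calc (G k:ℝ) * (2 ^ k * 2 ^ ((G k).size) * 4)⁻¹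
          ≤ 2 ^ ((G k).size) * (2 ^ k * 2 ^ ((G k).size) * 4)⁻¹ := by gcongr
        _ = ((2:ℝ) ^ k * 4)⁻¹ := by
            field_simp
        _ ≤ 1/4 := by
            rw [one_div]
            apply inv_anti₀ (by norm_num)
            nlinarith
    have hNpos : (0:ℝ) < (N (k+1):ℝ) := by
      have := hN1 (k+1)
      exact_mod_cast Nat.lt_of_lt_of_le Nat.zero_lt_one this
    have hGpos : (0:ℝ) < (G k:ℝ) := by
      have := hG1 k
      exact_mod_cast Nat.lt_of_lt_of_le Nat.zero_lt_one this
    have hexp : (G k : ℝ) * (((G k).size + 2 : ℕ) * (N (k+1) : ℝ)⁻¹ + ((2:ℝ)⁻¹) ^ K)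
        = (G k : ℝ) * (((G k).size + 2 : ℕ)) * (N (k+1) : ℝ)⁻¹ + (G k : ℝ) * ((2:ℝ)⁻¹) ^ K := by
      ring
    have h7 : (3/4:ℝ) ≤ (G k : ℝ) * (((G k).size + 2 : ℕ)) * (N (k+1) : ℝ)⁻¹ := by
      rw [hexp] at h4
      linarith
    have h8 : (3:ℝ) * (N (k+1):ℝ) ≤ 4 * ((G k:ℝ) * (((G k).size + 2 : ℕ))) := by
      have h9 : (3/4:ℝ) * (N (k+1):ℝ)
          ≤ ((G k : ℝ) * (((G k).size + 2 : ℕ)) * (N (k+1) : ℝ)⁻¹) * (N (k+1):ℝ) := by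
        apply mul_le_mul_of_nonneg_right h7 hNpos.le
      have h10 : ((G k : ℝ) * (((G k).size + 2 : ℕ)) * (N (k+1) : ℝ)⁻¹) * (N (k+1):ℝ)
          = (G k : ℝ) * (((G k).size + 2 : ℕ)) := by
        field_simp
      rw [h10] at h9
      linarith
    have h11 : 3 * N (k+1) ≤ 4 * (G k * ((G k).size + 2)) := by
      exact_mod_cast h8
    have h12 : G k * ((G k).size + 2) = ((G k).size + 2) * G k := by ring
    have h13 : 2 * ((G k).size + 2) * G k = 2 * (((G k).size + 2) * G k) := by ring
    rw [h12] at h11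
    rw [h13]
    omega
  -- size recursion
  have hGsucc : ∀ k, G (k+1) = G k * N (k+1) := by
    intro k
    rw [hGdef]
    simp only
    rw [Finset.prod_range_succ]
    ring
  have hsize : ∀ k, (G (k+1)).size ≤ 2 * (G k).size + ((G k).size + 2).size + 2 := by
    intro k
    have h2 : G (k+1) ≤ (2 * ((G k).size + 2)) * (G k * G k) := by
      rw [hGsucc k]
      calc G k * N (k+1) ≤ G k * (2 * ((G k).size + 2) * G k) :=
            Nat.mul_le_mul le_rfl (hA k)
        _ = (2 * ((G k).size + 2)) * (G k * G k) := by ring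
    have h3 := Nat.size_le_size h2
    have h4 := size_mul_le (2 * ((G k).size + 2)) (G k * G k)
    have h5 := size_mul_le (G k) (G k)
    have h6 : (2 * ((G k).size + 2)).size ≤ ((G k).size + 2).size + 1 := by
      have he : 2 * ((G k).size + 2) = ((G k).size + 2) <<< 1 := by
        rw [Nat.shiftLeft_eq]
        ring
      rw [he, Nat.size_shiftLeft (by omega)]
    omega
  set M : ℕ := (G 2).size + 30 with hMdef
  have hM0 : M ≠ 0 := by omega
  have hMsz : M.size ≤ M := Nat.size_le.mpr Nat.lt_two_pow_self
  have hboot : ∀ k, 2 ≤ k → (G k).size + (2*k + M.size + 9) ≤ M * 2 ^ k := by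
    intro k hk
    induction k, hk using Nat.le_induction with
    | base =>
      have h22 : (2:ℕ) ^ 2 = 4 := by norm_num
      omega
    | succ n hn ih =>
      have hs := hsize n
      have hsn2 : (G n).size + 2 ≤ M * 2 ^ n := by omega
      have hszb : ((G n).size + 2).size ≤ M.size + n := by
        have hh2 : (M * 2 ^ n).size = M.size + n := by
          rw [← Nat.shiftLeft_eq, Nat.size_shiftLeft hM0]
        calc ((G n).size + 2).size ≤ (M * 2^n).size := Nat.size_le_size hsn2
          _ = M.size + n := hh2
      have hpow : M * 2 ^ (n+1) = 2 * (M * 2 ^ n) := by ring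
      omega
  -- final contradiction with the growth hypothesis
  obtain ⟨k, hk2, hkbig⟩ : ∃ k, 2 ≤ k ∧ (2^M) ^ (2^k) < α k := by
    have h := hbig (2^M)
    rw [Filter.frequently_atTop] at h
    obtain ⟨k, hk, hkp⟩ := h 2
    exact ⟨k, hk, hkp⟩
  have h1 : α k ≤ G k := le_trans (hNα k) (hNG k)
  have h2 : G k < 2 ^ ((G k).size) := Nat.lt_size_self _
  have h3 : (G k).size ≤ M * 2 ^ k := by
    have := hboot k hk2
    omega
  have h4 : (2:ℕ) ^ ((G k).size) ≤ 2 ^ (M * 2^k) := Nat.pow_le_pow_right (by norm_num) h3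
  have h5 : (2:ℕ)^(M * 2^k) = (2^M)^(2^k) := pow_mul 2 M (2^k)
  omega

theorem stmt13 (a : ℕ → ℕ) (hmono : Monotone a)
    (hodd : ∀ n, 1 ≤ n → Odd (a n)) (hpos : ∀ n, 1 ≤ n → 0 < a n)
    (hlimsup : ∀ C : ℝ, ∃ᶠ n : ℕ in atTop, C < (a n : ℝ) ^ (((2 : ℝ) ^ n)⁻¹))
    (r : ℕ → ℕ) (hr : Function.Injective r)
    (c : ℕ → ℤ) (hc : ∀ n, Odd (c n)) :
    Irrational (∑' n : ℕ,
      1 / ((2 : ℝ) ^ r (n + 1) * (a (n + 1) : ℝ) * (c (n + 1) : ℝ))) := by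
  have hbig : ∀ C : ℕ, ∃ᶠ k : ℕ in atTop, C ^ 2 ^ k < a (k+1) := by
    intro C
    rw [Filter.frequently_atTop]
    intro b
    set C' : ℕ := max C 1 with hC'def
    have hC'1 : 1 ≤ C' := le_max_right _ _
    have h := hlimsup ((C' : ℕ) : ℝ)
    rw [Filter.frequently_atTop] at h
    obtain ⟨n, hn, hC⟩ := h (b+1)
    refine ⟨n - 1, by omega, ?_⟩
    have hn1 : n - 1 + 1 = n := by omega
    rw [hn1]
    have ha0 : (0:ℝ) ≤ (a n : ℝ) := by positivity
    have hE : (0:ℝ) < (2:ℝ)^n := by positivity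
    have h2 : ((C':ℕ):ℝ) ^ ((2:ℝ)^n) < ((a n:ℝ) ^ (((2:ℝ)^n)⁻¹)) ^ ((2:ℝ)^n) :=
      Real.rpow_lt_rpow (by positivity) hC hE
    have h3 : ((a n:ℝ) ^ (((2:ℝ)^n)⁻¹)) ^ ((2:ℝ)^n) = (a n:ℝ) := by
      rw [← Real.rpow_mul ha0, inv_mul_cancel₀ (ne_of_gt hE), Real.rpow_one]
    have h4 : ((2:ℝ)^n) = (((2:ℕ)^n : ℕ):ℝ) := by push_cast; ring
    rw [h3, h4, Real.rpow_natCast] at h2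
    have h5 : C' ^ 2 ^ n < a n := by exact_mod_cast h2
    calc C ^ 2 ^ (n-1) ≤ C' ^ 2 ^ (n-1) := Nat.pow_le_pow_left (le_max_left _ _) _
      _ ≤ C' ^ 2 ^ n := Nat.pow_le_pow_right hC'1 (Nat.pow_le_pow_right (by norm_num) (by omega))
      _ < a n := h5
  have key := aux (fun k => a (k+1)) (fun i j hij => hmono (Nat.succ_le_succ hij))
    (fun n => hodd (n+1) (by omega)) (fun n => hpos (n+1) (by omega)) hbig
    (fun k => r (k+1)) (fun i j hij => by have := hr hij; omega)
    (fun k => c (k+1)) (fun n => hc (n+1))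
  exact key
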